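/- Let X be a natural number with 2n base-b digits (b ≥ 2), and let Y, R be the outputs of Bombelli's shift-and-subtract algorithm: Y is built digit by digit where each digit y_i = max{β | 2bY_{i+1}β + β² ≤ (R_{i+1} x_{2i+1} x_{2i})_b} and R_i = (R_{i+1} x_{2i+1} x_{2i})_b − (2bY_{i+1}y_i + y_i²). Then Y² ≤ X < (Y+1)² and R = X − Y². -/

import Mathlib

/-- One iteration of Bombelli's shift-and-subtract algorithm in radix `b`:
given the current partial root `Y` and partial remainder `R`, bring down the
next two digits `d = (x₁, x₀)` and compute the next digit
`y = max {β | 2·b·Y·β + β² ≤ b²·R + b·x₁ + x₀}` (it is always `< b`, so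
searching up to `b` suffices), returning the new partial root and remainder. -/
def bombelliStep (b : ℕ) (YR : ℕ × ℕ) (d : ℕ × ℕ) : ℕ × ℕ :=
  let Y := YR.1
  let R := YR.2
  let M := b ^ 2 * R + b * d.1 + d.2
  let y := Nat.findGreatest (fun β => 2 * b * Y * β + β ^ 2 ≤ M) b
  (b * Y + y, M - (2 * b * Y * y + y ^ 2))

/-- Bombelli's algorithm on the list of digit pairs of the radicand. -/
def bombelli (b : ℕ) (ds : List (ℕ × ℕ)) : ℕ × ℕ :=
  ds.foldl (bombelliStep b) (0, 0)

/-- The natural number whose radix-`b` digits (from most significant)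
are given by the list of digit pairs `ds`. -/
def radixVal (b : ℕ) (ds : List (ℕ × ℕ)) : ℕ :=
  ds.foldl (fun acc d => b ^ 2 * acc + b * d.1 + d.2) 0

lemma bombelliStep_inv (b Y R x₁ x₀ : ℕ) (hb : 2 ≤ b) (h1 : x₁ < b) (h0 : x₀ < b)
    (hR : R ≤ 2 * Y) :
    (bombelliStep b (Y, R) (x₁, x₀)).1 ^ 2 + (bombelliStep b (Y, R) (x₁, x₀)).2
      = b ^ 2 * (Y ^ 2 + R) + b * x₁ + x₀ ∧
    (bombelliStep b (Y, R) (x₁, x₀)).2 ≤ 2 * (bombelliStep b (Y, R) (x₁, x₀)).1 := by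
  simp only [bombelliStep]
  set M := b ^ 2 * R + b * x₁ + x₀ with hM
  set y := Nat.findGreatest (fun β => 2 * b * Y * β + β ^ 2 ≤ M) b with hy
  have hyspec : 2 * b * Y * y + y ^ 2 ≤ M := by
    have := Nat.findGreatest_spec (P := fun β => 2 * b * Y * β + β ^ 2 ≤ M)
      (Nat.zero_le b) (by simp)
    simpa using this
  have hyle : y ≤ b := Nat.findGreatest_le b
  have hylt : y < b := by
    rcases Nat.lt_or_ge y b with h | h
    · exact h
    · exfalso
      have hyb : y = b := le_antisymm hyle h
      have hx : b * x₁ + x₀ < b ^ 2 := by nlinarith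
      have hMlt : M < b ^ 2 * (2 * Y) + b ^ 2 := by
        have : b ^ 2 * R ≤ b ^ 2 * (2 * Y) := Nat.mul_le_mul_left _ hR
        omega
      have he : 2 * b * Y * b + b ^ 2 = b ^ 2 * (2 * Y) + b ^ 2 := by ring
      rw [hyb] at hyspec; omega
  have hmax := Nat.findGreatest_is_greatest (P := fun β => 2 * b * Y * β + β ^ 2 ≤ M)
    (n := b) (k := y + 1) (by omega) (by omega)
  simp only [not_le] at hmax
  have hexp : 2 * b * Y * (y + 1) + (y + 1) ^ 2
      = (2 * b * Y * y + y ^ 2) + 2 * (b * Y + y) + 1 := by ring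
  have hsq : (b * Y + y) ^ 2 = b ^ 2 * Y ^ 2 + (2 * b * Y * y + y ^ 2) := by ring
  have hbb : b ^ 2 * (Y ^ 2 + R) = b ^ 2 * Y ^ 2 + b ^ 2 * R := by ring
  exact ⟨by omega, by omega⟩

lemma bombelli_inv (b : ℕ) (hb : 2 ≤ b) (ds : List (ℕ × ℕ)) :
    ∀ Y R : ℕ, (∀ d ∈ ds, d.1 < b ∧ d.2 < b) → R ≤ 2 * Y →
    (ds.foldl (bombelliStep b) (Y, R)).1 ^ 2 + (ds.foldl (bombelliStep b) (Y, R)).2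
      = ds.foldl (fun acc d => b ^ 2 * acc + b * d.1 + d.2) (Y ^ 2 + R)
    ∧ (ds.foldl (bombelliStep b) (Y, R)).2 ≤ 2 * (ds.foldl (bombelliStep b) (Y, R)).1 := by
  induction ds with
  | nil => intro Y R _ hR; simpa using hR
  | cons d tl ih =>
    intro Y R hd hR
    obtain ⟨h1, h0⟩ := hd d List.mem_cons_self
    obtain ⟨hval, hrem⟩ := bombelliStep_inv b Y R d.1 d.2 hb h1 h0 hR
    simp only [List.foldl_cons]
    have := ih (bombelliStep b (Y, R) d).1 (bombelliStep b (Y, R) d).2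
      (fun e he => hd e (List.mem_cons_of_mem _ he)) hrem
    rw [hval] at this
    simpa using this

theorem bombelli_sound (b : ℕ) (hb : 2 ≤ b) (ds : List (ℕ × ℕ))
    (hdigits : ∀ d ∈ ds, d.1 < b ∧ d.2 < b) :
    (bombelli b ds).1 ^ 2 ≤ radixVal b ds ∧
      radixVal b ds < ((bombelli b ds).1 + 1) ^ 2 ∧
      (bombelli b ds).2 = radixVal b ds - (bombelli b ds).1 ^ 2 := by
  have h := bombelli_inv b hb ds 0 0 hdigits (by simp)
  simp only [bombelli, radixVal]
  have hz : (0 : ℕ) ^ 2 + 0 = 0 := by simp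
  rw [hz] at h
  obtain ⟨h1, h2⟩ := h
  refine ⟨by omega, ?_, by omega⟩
  have : ((ds.foldl (bombelliStep b) (0, 0)).1 + 1) ^ 2
      = (ds.foldl (bombelliStep b) (0, 0)).1 ^ 2
        + 2 * (ds.foldl (bombelliStep b) (0, 0)).1 + 1 := by ring
  omega
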